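/- Vanishing of the partition function: for partitions λ, μ with at most n parts, if λ ⊄ μ then Z_λ(a_μ|a) = 0, where the substitution sets x_i = a_{n+1−i+μ_i}. -/

import Mathlib

/-- Exactly two of the four Booleans are `true` (the six-vertex/ice admissibility condition). -/
abbrev ExactlyTwo (a b c d : Bool) : Prop :=
  ((cond a 1 0) + (cond b 1 0) + (cond c 1 0) + (cond d 1 0) : ℕ) = 2

/-- Boltzmann weight of a rectilinear vertex on a row with parameter `x` in a column with
parameter `a`; `W N E S` record the presence of a hydrogen atom at the west, north, east,
south positions adjacent to the vertex.  The vertical molecule gets `x/a`, the molecule with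
hydrogens north and west gets `x/a - 1`, the other admissible molecules get `1`, and
inadmissible configurations get `0`. -/
noncomputable def rectWeight {K : Type*} [Field K] (x a : K) (W N E S : Bool) : K :=
  if W = true ∧ N = true ∧ E = false ∧ S = false then x / a - 1
  else if N = true ∧ S = true ∧ W = false ∧ E = false then x / a
  else if ExactlyTwo W N E S then 1 else 0

/-- A (pre-)state of the six-vertex model on an `n × m` grid of vertices: `s.1 i j = true`
iff the hydrogen of the horizontal edge west of the vertex in row `i`, column `j` sits at its
east end (`j = 0` and `j = m` are the boundary half-edges), and `s.2 i j = true` iff the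
hydrogen of the vertical edge north of the vertex in row `i`, column `j` sits at its south
end (`i = 0` and `i = n` are the boundary half-edges). -/
abbrev IceState (n m : ℕ) := (Fin n → Fin (m + 1) → Bool) × (Fin (n + 1) → Fin m → Bool)

/-- Hydrogen adjacent to the west of vertex `(i,j)`. -/
def occW {n m : ℕ} (s : IceState n m) (i : Fin n) (j : Fin m) : Bool := s.1 i j.castSucc
/-- Hydrogen adjacent to the east of vertex `(i,j)`. -/
def occE {n m : ℕ} (s : IceState n m) (i : Fin n) (j : Fin m) : Bool := !(s.1 i j.succ)
/-- Hydrogen adjacent to the north of vertex `(i,j)`. -/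
def occN {n m : ℕ} (s : IceState n m) (i : Fin n) (j : Fin m) : Bool := s.2 i.castSucc j
/-- Hydrogen adjacent to the south of vertex `(i,j)`. -/
def occS {n m : ℕ} (s : IceState n m) (i : Fin n) (j : Fin m) : Bool := !(s.2 i.succ j)

/-- Admissibility and the `λ`-boundary conditions: every vertex has exactly two adjacent
hydrogens; the left and right boundaries are filled with hydrogens; the lower boundary is
devoid of hydrogens; and the top boundary has hydrogens exactly away from the (`1`-based)
columns `λ_i + n + 1 - i`. -/
abbrev IsAdmissible (n m : ℕ) (lam : Fin n → ℕ) (s : IceState n m) : Prop :=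
  (∀ (i : Fin n) (j : Fin m), ExactlyTwo (occW s i j) (occN s i j) (occE s i j) (occS s i j)) ∧
  (∀ i : Fin n, s.1 i 0 = true) ∧
  (∀ i : Fin n, s.1 i (Fin.last m) = false) ∧
  (∀ j : Fin m, s.2 (Fin.last n) j = true) ∧
  (∀ j : Fin m, s.2 0 j = true ↔ ∀ i : Fin n, (j : ℕ) + 1 ≠ lam i + (n - (i : ℕ)))

/-- Generalized six-vertex partition function with `λ`-boundary conditions: the sum over all
admissible states of the product over all vertices of an arbitrary local weight `w`,
depending on the row, the column, and the local configuration `W N E S` of hydrogens. -/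
noncomputable def ZPFgen (n m : ℕ) (lam : Fin n → ℕ) {R : Type*} [CommRing R]
    (w : Fin n → Fin m → Bool → Bool → Bool → Bool → R) : R :=
  ∑ s ∈ Finset.univ.filter (IsAdmissible n m lam),
    ∏ i : Fin n, ∏ j : Fin m, w i j (occW s i j) (occN s i j) (occE s i j) (occS s i j)

/-- The six-vertex partition function `Z_λ(x|a)` with `λ`-boundary conditions and Boltzmann
weights `x_i/a_j` (vertical molecule), `x_i/a_j - 1` (hydrogens north and west), `1`
(otherwise), on an `n × m` grid (columns `1`-based: column `j : Fin m` has parameter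
`a (j+1)`). -/
noncomputable def ZPF (n m : ℕ) (lam : Fin n → ℕ) {K : Type*} [Field K]
    (x : Fin n → K) (a : ℤ → K) : K :=
  ZPFgen n m lam (fun i j W N E S => rectWeight (x i) (a ((j : ℤ) + 1)) W N E S)

section Aux

variable {n m : ℕ} {lam : Fin n → ℕ}

def Bcnt (s : IceState n m) (lev : Fin (n + 1)) (c : ℕ) : ℕ :=
  ∑ jn ∈ Finset.range c, if h : jn < m then (!(s.2 lev ⟨jn, h⟩)).toNat else 0

lemma cons_eq (s : IceState n m) (hs : IsAdmissible n m lam s) (i : Fin n) (j : Fin m) :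
    (occW s i j).toNat + (occN s i j).toNat + (occE s i j).toNat + (occS s i j).toNat = 2 :=
  hs.1 i j

lemma tel (s : IceState n m) (hs : IsAdmissible n m lam s) (i : Fin n) :
    ∀ (c : ℕ), c ≤ m → ∀ f : Fin (m + 1), (f : ℕ) = c →
      Bcnt s i.succ c + (!(s.1 i f)).toNat = Bcnt s i.castSucc c := by
  intro c
  induction c with
  | zero =>
    intro _ f hf
    have hf0 : f = 0 := by ext; simpa using hf
    simp [Bcnt, hf0, hs.2.1 i]
  | succ c IH =>
    intro hc f hf
    have hcm : c < m := hc
    have hfj : f = (⟨c, hcm⟩ : Fin m).succ := by ext; simp [hf]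
    have hIH := IH (le_of_lt hcm) (⟨c, hcm⟩ : Fin m).castSucc (by simp)
    have hcons := cons_eq s hs i ⟨c, hcm⟩
    simp only [occW, occN, occE, occS] at hcons
    have nb : ∀ b : Bool, (!b).toNat + b.toNat = 1 := by decide
    have nb1 := nb (s.1 i (⟨c, hcm⟩ : Fin m).castSucc)
    have nb2 := nb (s.2 i.castSucc ⟨c, hcm⟩)
    have nb3 := nb (s.1 i (⟨c, hcm⟩ : Fin m).succ)
    have nb4 := nb (s.2 i.succ ⟨c, hcm⟩)
    rw [hfj]
    simp only [Bcnt, Finset.sum_range_succ, dif_pos hcm] at hIH ⊢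
    omega

lemma Bcnt_total_aux (s : IceState n m) (hs : IsAdmissible n m lam s) :
    ∀ k, k ≤ n → ∀ lev : Fin (n + 1), (lev : ℕ) = n - k → Bcnt s lev m = k := by
  intro k
  induction k with
  | zero =>
    intro _ lev hlev
    have hl : lev = Fin.last n := by ext; simpa using hlev
    rw [hl]
    apply Finset.sum_eq_zero
    intro jn hjn
    have hj : jn < m := Finset.mem_range.1 hjn
    rw [dif_pos hj, hs.2.2.2.1 ⟨jn, hj⟩]
    rfl
  | succ k IH =>
    intro hk lev hlev
    have htn : n - (k + 1) < n := by omega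
    have hI : lev = (⟨n - (k + 1), htn⟩ : Fin n).castSucc := by ext; simpa using hlev
    have htel := tel s hs ⟨n - (k + 1), htn⟩ m le_rfl (Fin.last m) (by simp)
    have hIH := IH (by omega) (⟨n - (k + 1), htn⟩ : Fin n).succ (by simp; omega)
    rw [hIH, hs.2.2.1 ⟨n - (k + 1), htn⟩] at htel
    rw [hI, ← htel]
    rfl

lemma Bcnt_total (s : IceState n m) (hs : IsAdmissible n m lam s) (lev : Fin (n + 1)) :
    Bcnt s lev m = n - (lev : ℕ) :=
  Bcnt_total_aux s hs (n - (lev : ℕ)) (by omega) lev (by omega)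

lemma Bcnt_mono_lev (s : IceState n m) (hs : IsAdmissible n m lam s) :
    ∀ t, t ≤ n → ∀ lev : Fin (n + 1), (lev : ℕ) = t → ∀ c, c ≤ m →
      Bcnt s lev c ≤ Bcnt s 0 c := by
  intro t
  induction t with
  | zero =>
    intro _ lev hlev c _
    have : lev = 0 := by ext; simpa using hlev
    rw [this]
  | succ t IH =>
    intro ht lev hlev c hc
    have htn : t < n := by omega
    have hl : lev = (⟨t, htn⟩ : Fin n).succ := by ext; simpa using hlev
    have htel := tel s hs ⟨t, htn⟩ c hc ⟨c, by omega⟩ rfl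
    have hIH := IH (by omega) (⟨t, htn⟩ : Fin n).castSucc (by simp) c hc
    rw [hl]
    omega

lemma Bcnt_full (s : IceState n m) (lev : Fin (n + 1)) (c : ℕ) (hc : c ≤ m)
    (h : ∀ j : Fin m, s.2 lev j = false → (j : ℕ) < c) :
    Bcnt s lev m = Bcnt s lev c := by
  unfold Bcnt
  rw [Finset.range_eq_Ico, Finset.range_eq_Ico,
      ← Finset.sum_Ico_consecutive _ (Nat.zero_le c) hc]
  have hz : ∀ jn ∈ Finset.Ico c m,
      (if hj : jn < m then (!(s.2 lev ⟨jn, hj⟩)).toNat else 0) = 0 := by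
    intro jn hjn
    obtain ⟨h1, h2⟩ := Finset.mem_Ico.1 hjn
    rw [dif_pos h2]
    cases hb : s.2 lev ⟨jn, h2⟩ with
    | false => exact absurd (h _ hb) (by simp; omega)
    | true => rfl
  rw [Finset.sum_eq_zero hz, add_zero]

lemma Bcnt_single (s : IceState n m) (lev : Fin (n + 1)) (c : ℕ) (hc : c ≤ m)
    (j0 : Fin m) (h0 : c ≤ (j0 : ℕ)) (hf : s.2 lev j0 = false) :
    Bcnt s lev c + 1 ≤ Bcnt s lev m := by
  unfold Bcnt
  rw [Finset.range_eq_Ico, Finset.range_eq_Ico,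
      ← Finset.sum_Ico_consecutive _ (Nat.zero_le c) hc]
  have hj0 : (j0 : ℕ) ∈ Finset.Ico c m := Finset.mem_Ico.2 ⟨h0, j0.isLt⟩
  have hone : 1 ≤ ∑ jn ∈ Finset.Ico c m,
      (if hj : jn < m then (!(s.2 lev ⟨jn, hj⟩)).toNat else 0) := by
    have := Finset.single_le_sum
      (f := fun jn => if hj : jn < m then (!(s.2 lev ⟨jn, hj⟩)).toNat else 0)
      (fun i _ => Nat.zero_le _) hj0
    rw [dif_pos j0.isLt] at this
    simpa [Fin.eta, hf] using this
  omega

end Aux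

section Key

variable {n m : ℕ}

/-- the designated column (1-based) in row `t`. -/
def Ccol (n : ℕ) (mu : Fin n → ℕ) (t : ℕ) : ℕ :=
  if h : t < n then mu ⟨t, h⟩ + (n - t) else 0

lemma Ccol_lt {mu : Fin n → ℕ} {t : ℕ} (h : t < n) :
    Ccol n mu t = mu ⟨t, h⟩ + (n - t) := dif_pos h

lemma key {lam : Fin n → ℕ} (mu : Fin n → ℕ) (hlam : Antitone lam) (hmu : Antitone mu)
    (hm : ∀ i : Fin n, lam i + (n - (i : ℕ)) ≤ m)
    (t0 : Fin n) (ht0 : mu t0 < lam t0)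
    (s : IceState n m) (hs : IsAdmissible n m lam s) :
    ∃ (i : Fin n) (j : Fin m), (j : ℕ) + 1 = mu i + (n - (i : ℕ)) ∧
      occW s i j = true ∧ occN s i j = true ∧ occE s i j = false ∧ occS s i j = false := by
  classical
  by_contra H
  -- admissible non-empty-vertex consequence
  have Hocc : ∀ (i : Fin n) (j : Fin m), (j : ℕ) + 1 = mu i + (n - (i : ℕ)) →
      occW s i j = true → occN s i j = false := by
    intro i j hcol hW
    cases hN : occN s i j with
    | false => rfl
    | true =>
      exfalso
      have h2 := cons_eq s hs i j
      rw [hW, hN] at h2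
      have hE : occE s i j = false := by
        cases hE' : occE s i j
        · rfl
        · rw [hE'] at h2; simp [Bool.toNat] at h2
          have := Bool.toNat_le (occS s i j); omega
      have hSn : occS s i j = false := by
        cases hS' : occS s i j
        · rfl
        · rw [hS'] at h2; simp [Bool.toNat] at h2
          have := Bool.toNat_le (occE s i j); omega
      exact H ⟨i, j, hcol, hW, hN, hE, hSn⟩
  -- main downward induction: all particles at level (n-k) sit weakly left of column Ccol (n-k)
  have P : ∀ k, k ≤ n → ∀ lev : Fin (n + 1), (lev : ℕ) = n - k →
      ∀ j : Fin m, s.2 lev j = false → (j : ℕ) + 1 ≤ Ccol n mu (n - k) := by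
    intro k
    induction k with
    | zero =>
      intro _ lev hlev j hj
      have hl : lev = Fin.last n := by ext; simpa using hlev
      rw [hl, hs.2.2.2.1 j] at hj
      cases hj
    | succ k IH =>
      intro hk lev hlev j hj
      have htn : n - (k + 1) < n := by omega
      set t := n - (k + 1) with hT
      have hCt : Ccol n mu t = mu ⟨t, htn⟩ + (n - t) := Ccol_lt htn
      by_cases hcm : Ccol n mu t ≤ m
      · by_contra hbad
        push_neg at hbad
        set c := Ccol n mu t with hc
        have hc1 : 1 ≤ c := by omega
        have hjc : c ≤ (j : ℕ) := by omega
        have hC1 : Ccol n mu (n - k) ≤ c - 1 := by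
          by_cases h1 : n - k < n
          · rw [Ccol_lt h1]
            have hmle := hmu (show (⟨t, htn⟩ : Fin n) ≤ ⟨n - k, h1⟩ from by
              rw [Fin.le_def]; simp; omega)
            omega
          · rw [Ccol, dif_neg h1]; omega
        have hlevt : lev = (⟨t, htn⟩ : Fin n).castSucc := by ext; simpa using hlev
        -- level t+1: all particles lie strictly left of c-1
        have hfull : Bcnt s (⟨t, htn⟩ : Fin n).succ m
            = Bcnt s (⟨t, htn⟩ : Fin n).succ (c - 1) := by
          apply Bcnt_full s _ (c - 1) (by omega)
          intro j' hj'
          have := IH (by omega) (⟨t, htn⟩ : Fin n).succ (by simp; omega) j' hj'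
          omega
        have htot1 : Bcnt s (⟨t, htn⟩ : Fin n).succ m = n - (t + 1) := by
          simpa using Bcnt_total s hs (⟨t, htn⟩ : Fin n).succ
        have hlb : Bcnt s (⟨t, htn⟩ : Fin n).succ (c - 1) = n - (t + 1) := by
          rw [← hfull]; exact htot1
        have htott : Bcnt s lev m = n - t := by
          have h := Bcnt_total s hs lev
          rw [hlev] at h; exact h
        -- count at level t with bad particle j
        have hub : Bcnt s lev (c - 1) + 1 ≤ n - t := by
          have h1 := Bcnt_single s lev (c - 1) (by omega) j (by omega) hj
          omega
        have hcc : c - 1 < m + 1 := by omega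
        have htel := tel s hs ⟨t, htn⟩ (c - 1) (by omega) ⟨c - 1, hcc⟩ rfl
        rw [← hlevt] at htel
        -- deduce: west hydrogen present at vertex (t, c-1)
        have hx : (!(s.1 ⟨t, htn⟩ (⟨c - 1, hcc⟩ : Fin (m + 1)))).toNat = 0 := by omega
        have hW : s.1 ⟨t, htn⟩ (⟨c - 1, hcc⟩ : Fin (m + 1)) = true := by
          cases hb : s.1 ⟨t, htn⟩ (⟨c - 1, hcc⟩ : Fin (m + 1))
          · rw [hb] at hx; simp at hx
          · rfl
        have hc1m : c - 1 < m := by omega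
        have hcol : ((⟨c - 1, hc1m⟩ : Fin m) : ℕ) + 1 = mu ⟨t, htn⟩ + (n - (t : ℕ)) := by
          simp [hCt] at hc ⊢; omega
        have hWocc : occW s ⟨t, htn⟩ ⟨c - 1, hc1m⟩ = true := hW
        have hNocc := Hocc ⟨t, htn⟩ ⟨c - 1, hc1m⟩ hcol hWocc
        have hp : s.2 lev ⟨c - 1, hc1m⟩ = false := by rw [hlevt]; exact hNocc
        -- the extra particle at column c-1 overflows the count
        have hstep : Bcnt s lev (c - 1 + 1) = Bcnt s lev (c - 1) + 1 := by
          simp [Bcnt, Finset.sum_range_succ, hc1m, hp]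
        have hcc1 : c - 1 + 1 = c := by omega
        rw [hcc1] at hstep
        have hsingle2 := Bcnt_single s lev c hcm j hjc hj
        omega
      · -- designated column beyond the grid: trivial
        have : (j : ℕ) < m := j.isLt
        omega
  -- apply at the witness row t0
  have ht0n : (t0 : ℕ) < n := t0.isLt
  have hr := hm t0
  have hcr : Ccol n mu (t0 : ℕ) < lam t0 + (n - (t0 : ℕ)) := by
    rw [Ccol_lt ht0n]
    simp only [Fin.eta]
    omega
  have hcm : Ccol n mu (t0 : ℕ) ≤ m := by omega
  have hPt := P (n - (t0 : ℕ)) (by omega) ⟨(t0 : ℕ), by omega⟩ (by simp; omega)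
  have hnn : n - (n - (t0 : ℕ)) = (t0 : ℕ) := by omega
  rw [hnn] at hPt
  have hfull0 : Bcnt s ⟨(t0 : ℕ), by omega⟩ m = Bcnt s ⟨(t0 : ℕ), by omega⟩ (Ccol n mu (t0 : ℕ)) := by
    apply Bcnt_full s _ _ hcm
    intro j hjf
    have := hPt j hjf
    omega
  have htot0 : Bcnt s ⟨(t0 : ℕ), by omega⟩ m = n - (t0 : ℕ) := by
    simpa using Bcnt_total s hs ⟨(t0 : ℕ), by omega⟩
  have hmono := Bcnt_mono_lev s hs (t0 : ℕ) (by omega) ⟨(t0 : ℕ), by omega⟩ rfl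
    (Ccol n mu (t0 : ℕ)) hcm
  -- upper bound on the number of particles at the very top left of column Ccol t0
  have hupper : Bcnt s 0 (Ccol n mu (t0 : ℕ)) ≤ (Finset.Ioi t0).card := by
    set c := Ccol n mu (t0 : ℕ) with hc
    have hPred : ∀ jn ∈ Finset.range c,
        (if h : jn < m then (!(s.2 0 ⟨jn, h⟩)).toNat else 0)
          ≤ (if (∃ i : Fin n, jn + 1 = lam i + (n - (i : ℕ))) then 1 else 0) := by
      intro jn hjn
      have hjnm : jn < m := lt_of_lt_of_le (Finset.mem_range.1 hjn) hcm
      rw [dif_pos hjnm]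
      cases hb : s.2 0 ⟨jn, hjnm⟩ with
      | true => simp
      | false =>
        have hex : ∃ i : Fin n, jn + 1 = lam i + (n - (i : ℕ)) := by
          by_contra hno
          push_neg at hno
          have := (hs.2.2.2.2 ⟨jn, hjnm⟩).2 (by simpa using hno)
          rw [this] at hb; cases hb
        simp [hex]
    calc Bcnt s 0 c ≤ ∑ jn ∈ Finset.range c,
          (if (∃ i : Fin n, jn + 1 = lam i + (n - (i : ℕ))) then 1 else 0) :=
        Finset.sum_le_sum hPred
      _ = ((Finset.range c).filter (fun jn => ∃ i : Fin n, jn + 1 = lam i + (n - (i : ℕ)))).card := by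
        simp [Finset.sum_boole]
      _ ≤ (Finset.Ioi t0).card := by
        apply Finset.card_le_card_of_injOn
          (fun jn => if h : (∃ i : Fin n, jn + 1 = lam i + (n - (i : ℕ))) then h.choose else t0)
        · intro jn hjn
          obtain ⟨hjr, hex⟩ := Finset.mem_filter.1 hjn
          have hjc : jn < c := Finset.mem_range.1 hjr
          simp only [Finset.mem_coe]
          rw [dif_pos hex]
          have hspec := hex.choose_spec
          simp only [Finset.mem_Ioi]
          by_contra hle
          push_neg at hle
          have h1 : lam t0 ≤ lam hex.choose := hlam hle
          have h2 : (n : ℕ) - (t0 : ℕ) ≤ n - (hex.choose : ℕ) := by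
            have := hex.choose.isLt
            have : (hex.choose : ℕ) ≤ (t0 : ℕ) := hle
            omega
          omega
        · intro jn hjn jn' hjn' heq
          obtain ⟨_, hex⟩ := Finset.mem_filter.1 (Finset.mem_coe.1 hjn)
          obtain ⟨_, hex'⟩ := Finset.mem_filter.1 (Finset.mem_coe.1 hjn')
          simp only at heq
          rw [dif_pos hex, dif_pos hex'] at heq
          have h1 := hex.choose_spec
          have h2 := hex'.choose_spec
          rw [heq] at h1
          omega
  rw [Fin.card_Ioi] at hupper
  omega

end Key

/-- vanishing of the partition function: if `λ ⊄ μ` then `Z_λ(a_μ|a) = 0`,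
the substitution setting `x_i = a_{n+1-i+μ_i}` (`1`-based; `i : Fin n` is `0`-based). -/
theorem stmt11 {K : Type*} [Field K] (n : ℕ) (hn : 0 < n)
    (lam mu : Fin n → ℕ) (hlam : Antitone lam) (hmu : Antitone mu)
    (hnotsub : ¬ ∀ i : Fin n, lam i ≤ mu i)
    (a : ℤ → K) (ha : ∀ k, a k ≠ 0) :
    ZPF n (n + lam ⟨0, hn⟩) lam (fun i => a ((n : ℤ) - (i : ℕ) + mu i)) a = 0 := by
  classical
  push_neg at hnotsub
  obtain ⟨t0, ht0⟩ := hnotsub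
  rw [ZPF, ZPFgen]
  apply Finset.sum_eq_zero
  intro s hsmem
  have hs : IsAdmissible n (n + lam ⟨0, hn⟩) lam s := (Finset.mem_filter.1 hsmem).2
  have hm : ∀ i : Fin n, lam i + (n - (i : ℕ)) ≤ n + lam ⟨0, hn⟩ := by
    intro i
    have := hlam (show (⟨0, hn⟩ : Fin n) ≤ i from by rw [Fin.le_def]; simp)
    omega
  obtain ⟨i, j, hcol, hW, hN, hE, hS⟩ := key mu hlam hmu hm t0 ht0 s hs
  apply Finset.prod_eq_zero (Finset.mem_univ i)
  apply Finset.prod_eq_zero (Finset.mem_univ j)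
  rw [hW, hN, hE, hS, rectWeight, if_pos ⟨rfl, rfl, rfl, rfl⟩]
  have hlt := i.isLt
  have hidx : ((n : ℤ) - (i : ℕ) + mu i) = (j : ℤ) + 1 := by omega
  rw [hidx, div_self (ha _), sub_self]
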